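/- Let (W,S) be a finite crystallographic Coxeter system with (normalized) root system Δ, and let ρ be the half-sum of the positive roots. Then for every positive root γ one has 2(ρ,γ∨) − 1 ≥ l(s_γ), where γ∨ = 2γ/(γ,γ), s_γ is the reflection in γ, and l denotes the Coxeter length function on W. -/

import Mathlib

open scoped BigOperators Classical

noncomputable section

/-- The simple root `α_s` realized as a basis vector of `B → ℝ`. -/
def alr {B : Type} [DecidableEq B] (s : B) : B → ℝ := Pi.single s 1

/-- A geometric realization of a finite Coxeter system `(W,S)`:  the vector space `V`
is `B → ℝ`, with the simple root `α_s` realized as the basis vector `alr s`;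
the symmetric bilinear form satisfies `(α_s, α_t) = -cos (π / m(s,t)) √((α_s,α_s)(α_t,α_t))`
(so that each simple root may be rescaled, e.g. by a crystallographic normalization);
`σ` is the geometric representation and `refl` assigns to every root `γ = w(α_s)` the
reflection `s_γ = w s w⁻¹`. -/
structure GeomCoxeterSystem (B : Type) [Fintype B] [DecidableEq B]
    (W : Type) [Group W] where
  M : CoxeterMatrix B
  cs : CoxeterSystem M W
  finW : Finite W
  bil : (B → ℝ) →ₗ[ℝ] (B → ℝ) →ₗ[ℝ] ℝ
  bil_symm : ∀ u v, bil u v = bil v u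
  bil_diag_pos : ∀ s : B, 0 < bil (alr s) (alr s)
  bil_offdiag : ∀ s t : B, s ≠ t →
    bil (alr s) (alr t) =
      -Real.cos (Real.pi / (M s t)) *
        Real.sqrt (bil (alr s) (alr s) * bil (alr t) (alr t))
  σ : W →* ((B → ℝ) ≃ₗ[ℝ] (B → ℝ))
  σ_simple : ∀ (s : B) (v : B → ℝ),
    σ (cs.simple s) v =
      v - (2 * bil (alr s) v / bil (alr s) (alr s)) • alr s
  refl : (B → ℝ) → W
  refl_spec : ∀ (w : W) (s : B), refl (σ w (alr s)) = w * cs.simple s * w⁻¹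

namespace GeomCoxeterSystem

variable {B : Type} [Fintype B] [DecidableEq B] {W : Type} [Group W]
variable (g : GeomCoxeterSystem B W)


/-- The root system `Δ` of `(W,S)`. -/
def roots : Set (B → ℝ) := Set.range fun p : W × B => g.σ p.1 (alr p.2)

/-- The positive roots `Δ₊`. -/
def posRoots : Set (B → ℝ) := {v ∈ g.roots | ∀ s, 0 ≤ v s}

/-- `(W,S)` is crystallographic: the (normalized) root system satisfies
`2(γ,γ')/(γ,γ) ∈ ℤ` for all roots `γ, γ'`. -/
def IsCrystallographic : Prop :=
  ∀ γ ∈ g.roots, ∀ γ' ∈ g.roots, ∃ k : ℤ, 2 * g.bil γ γ' / g.bil γ γ = (k : ℝ)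

/-- The generator `[γ]` of the free algebra when `γ` is a root (and `0` otherwise). -/
def brkF (v : B → ℝ) : FreeAlgebra ℝ g.roots :=
  if h : v ∈ g.roots then FreeAlgebra.ι ℝ (⟨v, h⟩ : g.roots) else 0

/-- `γ : ℤ → V` lists (cyclically, with `γ_{j+m} = -γ_j`) the positive roots
`γ_0, …, γ_{m-1}` of a rank-two root subsystem of type `I₂(m)`, ordered so that
`ℝ_{≥0}⟨γ_i, γ_{i+1}⟩ ∩ Δ₊ = {γ_i, γ_{i+1}}`. -/
structure IsChain (m : ℕ) (γ : ℤ → (B → ℝ)) : Prop where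
  two_le : 2 ≤ m
  anti : ∀ j : ℤ, γ (j + m) = -γ j
  mem_pos : ∀ i : ℤ, 0 ≤ i → i < m → γ i ∈ g.posRoots
  inj : ∀ i j : ℤ, 0 ≤ i → i < m → 0 ≤ j → j < m → γ i = γ j → i = j
  indep : LinearIndependent ℝ ![γ 0, γ 1]
  cone : ∀ i : ℤ, 0 ≤ i → i ≤ (m : ℤ) - 2 →
    {v | v ∈ g.posRoots ∧ ∃ a b : ℝ, 0 ≤ a ∧ 0 ≤ b ∧ v = a • γ i + b • γ (i + 1)} =
      {γ i, γ (i + 1)}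
  closed : ∀ v ∈ g.roots, v ∈ Submodule.span ℝ {γ 0, γ 1} → ∃ j : ℤ, v = γ j

/-- The ordered product `[γ_0][γ_1]⋯[γ_{l-1}]` in the free algebra. -/
def chainProd (γ : ℤ → (B → ℝ)) (l : ℕ) : FreeAlgebra ℝ g.roots :=
  ((List.range l).map fun i => g.brkF (γ i)).prod

/-- The reversed product `[γ_{l-1}]⋯[γ_1][γ_0]` in the free algebra. -/
def chainProdRev (γ : ℤ → (B → ℝ)) (l : ℕ) : FreeAlgebra ℝ g.roots :=
  (((List.range l).reverse).map fun i => g.brkF (γ i)).prod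

/-- The defining relations (i)–(iv) of the bracket algebra `BE(W,S)`. -/
inductive BRel : FreeAlgebra ℝ g.roots → FreeAlgebra ℝ g.roots → Prop
  | neg (γ : B → ℝ) (h : γ ∈ g.roots) : BRel (g.brkF (-γ)) (-(g.brkF γ))
  | sq (γ : B → ℝ) (h : γ ∈ g.roots) : BRel (g.brkF γ * g.brkF γ) 0
  | quad (m : ℕ) (γ : ℤ → (B → ℝ)) (hc : g.IsChain m γ) (k : ℕ) (hk1 : 1 ≤ k)
      (hk2 : 2 * k ≤ m) :
      BRel (∑ i ∈ Finset.range (m + 1), g.brkF (γ i) * g.brkF (γ (i + k))) 0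
  | fourTerm (m : ℕ) (γ : ℤ → (B → ℝ)) (hc : g.IsChain m γ) (hm : 4 ≤ m) :
      BRel (g.brkF (γ (m / 2 - 1)) * g.chainProd γ (2 * (m / 2 - 1) + 1)
          + g.chainProd γ (2 * (m / 2 - 1) + 1) * g.brkF (γ (m / 2 - 1))
          + g.brkF (γ (m / 2 - 1)) * g.chainProdRev γ (2 * (m / 2 - 1) + 1)
          + g.chainProdRev γ (2 * (m / 2 - 1) + 1) * g.brkF (γ (m / 2 - 1))) 0

/-- The bracket algebra `BE(W,S)`. -/
def BE : Type := RingQuot g.BRel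

instance : Ring g.BE := inferInstanceAs (Ring (RingQuot g.BRel))
instance : Algebra ℝ g.BE := inferInstanceAs (Algebra ℝ (RingQuot g.BRel))

/-- The element `[γ]` of the bracket algebra `BE(W,S)`. -/
def brk (v : B → ℝ) : g.BE := RingQuot.mkAlgHom ℝ g.BRel (g.brkF v)

/-- Only the relations (i)–(iii): the quotient used to check that commutativity of
Dunkl elements only uses the quadratic relations. -/
inductive BRel3 : FreeAlgebra ℝ g.roots → FreeAlgebra ℝ g.roots → Prop
  | neg (γ : B → ℝ) (h : γ ∈ g.roots) : BRel3 (g.brkF (-γ)) (-(g.brkF γ))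
  | sq (γ : B → ℝ) (h : γ ∈ g.roots) : BRel3 (g.brkF γ * g.brkF γ) 0
  | quad (m : ℕ) (γ : ℤ → (B → ℝ)) (hc : g.IsChain m γ) (k : ℕ) (hk1 : 1 ≤ k)
      (hk2 : 2 * k ≤ m) :
      BRel3 (∑ i ∈ Finset.range (m + 1), g.brkF (γ i) * g.brkF (γ (i + k))) 0

/-- The algebra defined by the relations (i)–(iii) only. -/
def BE3 : Type := RingQuot g.BRel3

instance : Ring g.BE3 := inferInstanceAs (Ring (RingQuot g.BRel3))
instance : Algebra ℝ g.BE3 := inferInstanceAs (Algebra ℝ (RingQuot g.BRel3))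

def brk3 (v : B → ℝ) : g.BE3 := RingQuot.mkAlgHom ℝ g.BRel3 (g.brkF v)

/-- `⟨ω_s, γ∨⟩`, the pairing of the fundamental weight `ω_s` with the coroot
`γ∨ = 2γ/(γ,γ)`; in the coordinates of the basis of simple roots this equals
`γ_s (α_s, α_s) / (γ, γ)`. -/
def chevCoeff (s : B) (γ : B → ℝ) : ℝ :=
  γ s * g.bil (alr s) (alr s) / g.bil γ γ

/-- The Chevalley element `η_s = Σ_{γ ∈ Δ₊} ⟨ω_s, γ∨⟩ [γ]` of `BE(W,S)`. -/
def eta (s : B) : g.BE := ∑ᶠ γ ∈ g.posRoots, g.chevCoeff s γ • g.brk γ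

/-- The Dunkl element `θ_s = Σ_{s'} (α_s, α_{s'}) η_{s'}` of `BE(W,S)`. -/
def dunkl (s : B) : g.BE := ∑ s' : B, g.bil (alr s) (alr s') • g.eta s'

def eta3 (s : B) : g.BE3 := ∑ᶠ γ ∈ g.posRoots, g.chevCoeff s γ • g.brk3 γ

def dunkl3 (s : B) : g.BE3 := ∑ s' : B, g.bil (alr s) (alr s') • g.eta3 s'

/-! ### Quantization -/

/-- The coefficient ring `ℝ[q_s : s ∈ S]`. -/
abbrev QR (B : Type) : Type := MvPolynomial B ℝ

/-- `q_γ = q_s` for a simple root `γ = α_s` (junk value `1` otherwise). -/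
def qOf (v : B → ℝ) : QR B :=
  if h : ∃ s : B, v = alr s then MvPolynomial.X h.choose else 1

/-- The half-sum `ρ` of the positive roots. -/
def rho : B → ℝ := (2⁻¹ : ℝ) • ∑ᶠ γ ∈ g.posRoots, γ

/-- `(ρ, γ∨) = 2(ρ,γ)/(γ,γ)`. -/
def pairRho (γ : B → ℝ) : ℝ := 2 * g.bil g.rho γ / g.bil γ γ

/-- The generator `[γ]` in the free algebra over `ℝ[q_s]`. -/
def qbrkF (v : B → ℝ) : FreeAlgebra (QR B) g.roots :=
  if h : v ∈ g.roots then FreeAlgebra.ι (QR B) (⟨v, h⟩ : g.roots) else 0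

def qchainProd (γ : ℤ → (B → ℝ)) (l : ℕ) : FreeAlgebra (QR B) g.roots :=
  ((List.range l).map fun i => g.qbrkF (γ i)).prod

def qchainProdRev (γ : ℤ → (B → ℝ)) (l : ℕ) : FreeAlgebra (QR B) g.roots :=
  (((List.range l).reverse).map fun i => g.qbrkF (γ i)).prod

/-- The defining relations (i)'–(iv)' of the quantized bracket algebra `qBE(W,S)`. -/
inductive QRel : FreeAlgebra (QR B) g.roots → FreeAlgebra (QR B) g.roots → Prop
  | neg (γ : B → ℝ) (h : γ ∈ g.roots) : QRel (g.qbrkF (-γ)) (-(g.qbrkF γ))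
  | sqSimple (s : B) :
      QRel (g.qbrkF (alr s) * g.qbrkF (alr s)) (algebraMap (QR B) _ (MvPolynomial.X s))
  | sqPos (γ : B → ℝ) (h : γ ∈ g.posRoots) (hs : ∀ s : B, γ ≠ alr s) :
      QRel (g.qbrkF γ * g.qbrkF γ) 0
  | quad (m : ℕ) (γ : ℤ → (B → ℝ)) (hc : g.IsChain m γ) (k : ℕ) (hk1 : 1 ≤ k)
      (hk2 : 2 * k ≤ m) :
      QRel (∑ i ∈ Finset.range (m + 1), g.qbrkF (γ i) * g.qbrkF (γ (i + k))) 0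
  | fourTerm (m : ℕ) (γ : ℤ → (B → ℝ)) (hc : g.IsChain m γ) (hm : 4 ≤ m)
      (hl : (g.cs.length (g.refl (γ (m / 2 - 1))) : ℝ) ≠ 2 * g.pairRho (γ (m / 2 - 1)) - 1) :
      QRel (g.qbrkF (γ (m / 2 - 1)) * g.qchainProd γ (2 * (m / 2 - 1) + 1)
          + g.qchainProd γ (2 * (m / 2 - 1) + 1) * g.qbrkF (γ (m / 2 - 1))
          + g.qbrkF (γ (m / 2 - 1)) * g.qchainProdRev γ (2 * (m / 2 - 1) + 1)
          + g.qchainProdRev γ (2 * (m / 2 - 1) + 1) * g.qbrkF (γ (m / 2 - 1))) 0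

/-- The quantized bracket algebra `qBE(W,S)`. -/
def qBE : Type := RingQuot g.QRel

instance : Ring g.qBE := inferInstanceAs (Ring (RingQuot g.QRel))
instance : Algebra (QR B) g.qBE := inferInstanceAs (Algebra (QR B) (RingQuot g.QRel))

/-- The element `[γ]` of `qBE(W,S)`. -/
def qbrk (v : B → ℝ) : g.qBE := RingQuot.mkAlgHom (QR B) g.QRel (g.qbrkF v)

/-- The quantum Chevalley element `η̃_s`. -/
def qeta (s : B) : g.qBE :=
  ∑ᶠ γ ∈ g.posRoots, (MvPolynomial.C (g.chevCoeff s γ) : QR B) • g.qbrk γ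

/-- The quantum Dunkl element `θ̃_s`. -/
def qdunkl (s : B) : g.qBE :=
  ∑ s' : B, (MvPolynomial.C (g.bil (alr s) (alr s')) : QR B) • g.qeta s'

/-! ### Operators: divided differences and (quantum) Bruhat operators -/

/-- The action of `w ∈ W` on polynomial functions on `V`: `(w·f)(v) = f(σ(w⁻¹)v)`. -/
def polyAct (w : W) : MvPolynomial B ℝ →ₐ[ℝ] MvPolynomial B ℝ :=
  MvPolynomial.aeval fun s => ∑ s' : B, MvPolynomial.C ((g.σ w⁻¹ (alr s')) s) * MvPolynomial.X s'

/-- The linear polynomial `v ↦ (γ, v)`, i.e. `γ` regarded as an element of `S(V*)`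
via the bilinear form. -/
def linPoly (γ : B → ℝ) : MvPolynomial B ℝ :=
  ∑ s : B, MvPolynomial.C (g.bil γ (alr s)) * MvPolynomial.X s

/-- The divided difference (Demazure) operator `∂_γ = (1 - s_γ)/γ` on `S(V*)`. -/
def divDiff (γ : B → ℝ) (f : MvPolynomial B ℝ) : MvPolynomial B ℝ :=
  if h : ∃ q, f - g.polyAct (g.refl γ) f = g.linPoly γ * q then h.choose else 0

/-- The Bruhat operator `s_γ` on the group ring `ℝ⟨W⟩`: `w ↦ w s_γ` if
`l(w s_γ) = l(w) + 1` and `w ↦ 0` otherwise. -/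
def bruhatOp (γ : B → ℝ) : MonoidAlgebra ℝ W →ₗ[ℝ] MonoidAlgebra ℝ W :=
  (MonoidAlgebra.coeffLinearEquiv ℝ).symm.toLinearMap ∘ₗ (Finsupp.lsum ℝ fun w =>
    if g.cs.length (w * g.refl γ) = g.cs.length w + 1
    then Finsupp.lsingle (w * g.refl γ) else 0) ∘ₗ
    (MonoidAlgebra.coeffLinearEquiv ℝ).toLinearMap

/-- `q_{γ∨} = Π_s q_s^{n_s}` where `γ∨ = Σ_s n_s α_s∨`. -/
def qCoroot (γ : B → ℝ) : QR B :=
  ∏ s : B, MvPolynomial.X s ^ ⌊g.chevCoeff s γ⌋₊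

/-- The quantum Bruhat operator `s̃_γ` on the group ring `ℝ[q_s]⟨W⟩`. -/
def qBruhatOp (γ : B → ℝ) : MonoidAlgebra (QR B) W →ₗ[QR B] MonoidAlgebra (QR B) W :=
  (MonoidAlgebra.coeffLinearEquiv (QR B)).symm.toLinearMap ∘ₗ (Finsupp.lsum (QR B) fun w =>
    if g.cs.length (w * g.refl γ) = g.cs.length w + 1
    then Finsupp.lsingle (w * g.refl γ)
    else if (g.cs.length w : ℝ) = g.cs.length (w * g.refl γ) + 2 * g.pairRho γ - 1
    then g.qCoroot γ • Finsupp.lsingle (w * g.refl γ)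
    else 0) ∘ₗ
    (MonoidAlgebra.coeffLinearEquiv (QR B)).toLinearMap

/-- The ideal `I_W ⊂ S(V*)` generated by the `W`-invariant polynomials without
constant term. -/
def invIdeal : Ideal (MvPolynomial B ℝ) :=
  Ideal.span {f | (∀ w : W, g.polyAct w f = f) ∧ MvPolynomial.constantCoeff f = 0}

/-! ### Bruhat graph arrows -/

/-- An arrow `v → w` of the (extended) Bruhat graph:  `w = v s_γ` with `γ > 0` and
`l(w) = l(v) + 1`. -/
def coverArrow (v w : W) : Prop :=
  ∃ γ ∈ g.posRoots, w = v * g.refl γ ∧ g.cs.length w = g.cs.length v + 1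

/-- A quantum arrow `v →_e w` (labelled by the positive root `γ`) of the extended
Bruhat graph: `w = v s_γ` and `l(w) = l(v) - 2(ρ,γ∨) + 1`. -/
def qArrow (γ : B → ℝ) (v w : W) : Prop :=
  γ ∈ g.posRoots ∧ w = v * g.refl γ ∧
    (g.cs.length w : ℝ) = (g.cs.length v : ℝ) - 2 * g.pairRho γ + 1

/-! ### Bernstein–Gelfand–Gelfand polynomials and substitution operators -/

/-- The longest element `w₀` of `W`. -/
def w0 : W :=
  haveI := g.finW
  (Finite.exists_max g.cs.length).choose

/-- A choice of reduced word for `w`. -/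
def chooseWord (w : W) : List B := (g.cs.exists_reduced_word w).choose

/-- `X_{w₀} = |W|⁻¹ Π_{γ ∈ Δ₊} γ`. -/
def XwTop : MvPolynomial B ℝ :=
  MvPolynomial.C ((Nat.card W : ℝ)⁻¹) * ∏ᶠ γ ∈ g.posRoots, g.linPoly γ

/-- The composition of divided difference operators along a word. -/
def applyWord (l : List B) (f : MvPolynomial B ℝ) : MvPolynomial B ℝ :=
  l.foldr (fun s q => g.divDiff (alr s) q) f

/-- The Bernstein–Gelfand–Gelfand polynomial `X_w = ∂_{w⁻¹w₀} X_{w₀}`. -/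
def Xw (w : W) : MvPolynomial B ℝ := g.applyWord (g.chooseWord (w⁻¹ * g.w0)) g.XwTop

/-- `X_w` regarded as a polynomial with coefficients in `ℝ[q_s]`. -/
def XwR (w : W) : MvPolynomial B (QR B) :=
  MvPolynomial.map (algebraMap ℝ (QR B)) (g.Xw w)

/-- The operator on `ℝ[q_s]⟨W⟩` corresponding to the quantum Chevalley element `η̃_s`
via the quantum Bruhat representation. -/
def opEta (s : B) : Module.End (QR B) (MonoidAlgebra (QR B) W) :=
  ∑ᶠ γ ∈ g.posRoots, (MvPolynomial.C (g.chevCoeff s γ) : QR B) • g.qBruhatOp γ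

/-- The operator corresponding to the coordinate function `X_s = (2/(α_s,α_s)) ω_s`
under the substitution `ω_s ↦ η̃_s`. -/
def opX (s : B) : Module.End (QR B) (MonoidAlgebra (QR B) W) :=
  (MvPolynomial.C (2 / g.bil (alr s) (alr s)) : QR B) • g.opEta s

/-- The ordered product `Π_s F(s)^(m s)` (ascending order of `B`). -/
def monProd [LinearOrder B] (F : B → Module.End (QR B) (MonoidAlgebra (QR B) W))
    (m : B →₀ ℕ) : Module.End (QR B) (MonoidAlgebra (QR B) W) :=
  ((Finset.univ.sort (α := B) (· ≤ ·)).map fun s => F s ^ m s).prod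

/-- The operator `[f]` on `ℝ[q_s]⟨W⟩` obtained from `f ∈ S(V*) ⊗ ℝ[q_s]` by the
substitution `ω_s ↦ η̃_s` (and the quantum Bruhat representation); since the
operators `η̃_s` pairwise commute, the ordered products below realize exactly the
substitution of the commuting elements `η̃_s` into `f`. -/
def substOp [LinearOrder B] (f : MvPolynomial B (QR B)) :
    Module.End (QR B) (MonoidAlgebra (QR B) W) :=
  ∑ m ∈ f.support, f.coeff m • monProd g.opX m

/-! ### The twisted group algebra `BE(W,S){W}` -/

/-- Generators `[γ]` inside the free algebra on `Δ ⊕ W`. -/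
def tbrkF (v : B → ℝ) : FreeAlgebra ℝ (g.roots ⊕ W) :=
  if h : v ∈ g.roots then FreeAlgebra.ι ℝ (Sum.inl (⟨v, h⟩ : g.roots)) else 0

/-- Group-like generators `w ∈ W` inside the free algebra on `Δ ⊕ W`. -/
def tgrpF (w : W) : FreeAlgebra ℝ (g.roots ⊕ W) := FreeAlgebra.ι ℝ (Sum.inr w)

def tchainProd (γ : ℤ → (B → ℝ)) (l : ℕ) : FreeAlgebra ℝ (g.roots ⊕ W) :=
  ((List.range l).map fun i => g.tbrkF (γ i)).prod

def tchainProdRev (γ : ℤ → (B → ℝ)) (l : ℕ) : FreeAlgebra ℝ (g.roots ⊕ W) :=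
  (((List.range l).reverse).map fun i => g.tbrkF (γ i)).prod

/-- The defining relations of the twisted group algebra `BE(W,S){W}`:  the relations
of `BE(W,S)`, the group relations of `W`, and the commutation rule
`w [γ] = [w(γ)] w`. -/
inductive TRel : FreeAlgebra ℝ (g.roots ⊕ W) → FreeAlgebra ℝ (g.roots ⊕ W) → Prop
  | neg (γ : B → ℝ) (h : γ ∈ g.roots) : TRel (g.tbrkF (-γ)) (-(g.tbrkF γ))
  | sq (γ : B → ℝ) (h : γ ∈ g.roots) : TRel (g.tbrkF γ * g.tbrkF γ) 0
  | quad (m : ℕ) (γ : ℤ → (B → ℝ)) (hc : g.IsChain m γ) (k : ℕ) (hk1 : 1 ≤ k)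
      (hk2 : 2 * k ≤ m) :
      TRel (∑ i ∈ Finset.range (m + 1), g.tbrkF (γ i) * g.tbrkF (γ (i + k))) 0
  | fourTerm (m : ℕ) (γ : ℤ → (B → ℝ)) (hc : g.IsChain m γ) (hm : 4 ≤ m) :
      TRel (g.tbrkF (γ (m / 2 - 1)) * g.tchainProd γ (2 * (m / 2 - 1) + 1)
          + g.tchainProd γ (2 * (m / 2 - 1) + 1) * g.tbrkF (γ (m / 2 - 1))
          + g.tbrkF (γ (m / 2 - 1)) * g.tchainProdRev γ (2 * (m / 2 - 1) + 1)
          + g.tchainProdRev γ (2 * (m / 2 - 1) + 1) * g.tbrkF (γ (m / 2 - 1))) 0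
  | grpMul (w v : W) : TRel (g.tgrpF w * g.tgrpF v) (g.tgrpF (w * v))
  | grpOne : TRel (g.tgrpF 1) 1
  | comm (w : W) (γ : B → ℝ) (h : γ ∈ g.roots) :
      TRel (g.tgrpF w * g.tbrkF γ) (g.tbrkF (g.σ w γ) * g.tgrpF w)

/-- The twisted group algebra `BE(W,S){W}`. -/
def TwBE : Type := RingQuot g.TRel

instance : Ring g.TwBE := inferInstanceAs (Ring (RingQuot g.TRel))
instance : Algebra ℝ g.TwBE := inferInstanceAs (Algebra ℝ (RingQuot g.TRel))

/-- The element `[γ]` of `BE(W,S){W}`. -/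
def tbrk (v : B → ℝ) : g.TwBE := RingQuot.mkAlgHom ℝ g.TRel (g.tbrkF v)

/-- The element `w` of `BE(W,S){W}`. -/
def tgrp (w : W) : g.TwBE := RingQuot.mkAlgHom ℝ g.TRel (g.tgrpF w)

end GeomCoxeterSystem

open GeomCoxeterSystem

variable {B : Type} [Fintype B] [DecidableEq B] {W : Type} [Group W]




namespace GeomCoxeterSystem

set_option linter.unusedSectionVars false

variable {B : Type} [Fintype B] [DecidableEq B] {W : Type} [Group W] (g : GeomCoxeterSystem B W)

/-- coordinatewise nonnegativity -/
def Posv (v : B → ℝ) : Prop := ∀ s, 0 ≤ v s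

lemma posv_alr (i : B) : Posv (alr (B := B) i) := by
  intro s
  unfold alr
  rw [Pi.single_apply]
  split <;> norm_num

lemma posv_add {x y : B → ℝ} (hx : Posv x) (hy : Posv y) : Posv (x + y) := by
  intro s; have := hx s; have := hy s; simp only [Pi.add_apply]; linarith

lemma posv_smul {a : ℝ} (ha : 0 ≤ a) {x : B → ℝ} (hx : Posv x) : Posv (a • x) := by
  intro s; simpa using mul_nonneg ha (hx s)

lemma alr_ne_zero (i : B) : alr (B := B) i ≠ 0 := by
  intro h
  have := congrFun h i
  simp [alr] at this

lemma sigma_mul_apply (w w' : W) (v : B → ℝ) : g.σ (w * w') v = g.σ w (g.σ w' v) := by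
  rw [map_mul]; rfl

lemma sigma_one_apply (v : B → ℝ) : g.σ 1 v = v := by
  rw [map_one]; rfl

lemma sigma_inv_apply (w : W) (v : B → ℝ) : g.σ w (g.σ w⁻¹ v) = v := by
  rw [← g.sigma_mul_apply, mul_inv_cancel, g.sigma_one_apply]

lemma sigma_ne_zero (w : W) {v : B → ℝ} (hv : v ≠ 0) : g.σ w v ≠ 0 := by
  intro h
  apply hv
  have := congrArg (g.σ w⁻¹) h
  rwa [map_zero, ← g.sigma_mul_apply, inv_mul_cancel, g.sigma_one_apply] at this

lemma bil_sigma_simple (i : B) (u v : B → ℝ) :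
    g.bil (g.σ (g.cs.simple i) u) (g.σ (g.cs.simple i) v) = g.bil u v := by
  have hd := g.bil_diag_pos i
  rw [g.σ_simple, g.σ_simple]
  simp only [map_sub, map_smul, LinearMap.sub_apply, LinearMap.smul_apply, smul_eq_mul]
  rw [g.bil_symm u (alr i), g.bil_symm (alr i) v]
  field_simp
  ring

lemma bil_sigma (w : W) (u v : B → ℝ) :
    g.bil (g.σ w u) (g.σ w v) = g.bil u v := by
  induction w using CoxeterSystem.simple_induction g.cs generalizing u v with
  | simple i => exact g.bil_sigma_simple i u v
  | one => rw [g.sigma_one_apply, g.sigma_one_apply]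
  | mul w w' hw hw' => rw [g.sigma_mul_apply, g.sigma_mul_apply, hw, hw']

lemma mem_roots (w : W) (s : B) : g.σ w (alr s) ∈ g.roots := ⟨(w, s), rfl⟩

lemma roots_sigma (w : W) {γ : B → ℝ} (hγ : γ ∈ g.roots) : g.σ w γ ∈ g.roots := by
  obtain ⟨⟨w', s⟩, rfl⟩ := hγ
  rw [← g.sigma_mul_apply]
  exact g.mem_roots _ _

lemma bil_root_pos {γ : B → ℝ} (hγ : γ ∈ g.roots) : 0 < g.bil γ γ := by
  obtain ⟨⟨w, s⟩, rfl⟩ := hγ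
  rw [g.bil_sigma]
  exact g.bil_diag_pos s

lemma root_ne_zero {γ : B → ℝ} (hγ : γ ∈ g.roots) : γ ≠ 0 := by
  intro h
  have := g.bil_root_pos hγ
  rw [h] at this
  simp at this

lemma sigma_simple_self (i : B) : g.σ (g.cs.simple i) (alr i) = -(alr i) := by
  rw [g.σ_simple]
  have hd := (g.bil_diag_pos i).ne'
  have : 2 * g.bil (alr i) (alr i) / g.bil (alr i) (alr i) = 2 := by field_simp
  rw [this, two_smul]
  abel

lemma sigma_refl_apply {γ : B → ℝ} (hγ : γ ∈ g.roots) (v : B → ℝ) :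
    g.σ (g.refl γ) v = v - (2 * g.bil γ v / g.bil γ γ) • γ := by
  obtain ⟨⟨w, s⟩, rfl⟩ := hγ
  dsimp only
  have h1 : g.bil (g.σ w (alr s)) v = g.bil (alr s) (g.σ w⁻¹ v) := by
    conv_lhs => rw [← g.sigma_inv_apply w v, g.bil_sigma]
  have h2 : g.bil (g.σ w (alr s)) (g.σ w (alr s)) = g.bil (alr s) (alr s) := g.bil_sigma w _ _
  rw [g.refl_spec, g.sigma_mul_apply, g.sigma_mul_apply, g.σ_simple, map_sub, map_smul,
    g.sigma_inv_apply, h1, h2]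

lemma refl_mul_self {γ : B → ℝ} (hγ : γ ∈ g.roots) : g.refl γ * g.refl γ = 1 := by
  obtain ⟨⟨w, s⟩, rfl⟩ := hγ
  rw [g.refl_spec]
  have : w * g.cs.simple s * w⁻¹ * (w * g.cs.simple s * w⁻¹)
      = w * (g.cs.simple s * g.cs.simple s) * w⁻¹ := by group
  rw [this, g.cs.simple_mul_simple_self]
  group

lemma sigma_refl_self {γ : B → ℝ} (hγ : γ ∈ g.roots) : g.σ (g.refl γ) γ = -γ := by
  rw [g.sigma_refl_apply hγ]
  have hd := (g.bil_root_pos hγ).ne'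
  have : 2 * g.bil γ γ / g.bil γ γ = 2 := by field_simp
  rw [this, two_smul]
  abel

lemma posRoots_finite : g.posRoots.Finite := by
  have := g.finW
  exact (Set.finite_range fun p : W × B => g.σ p.1 (alr p.2)).subset fun v hv => hv.1

/-- positive roots as a finset -/
def PRF : Finset (B → ℝ) := g.posRoots_finite.toFinset

lemma mem_PRF {v : B → ℝ} : v ∈ g.PRF ↔ v ∈ g.posRoots := Set.Finite.mem_toFinset _

end GeomCoxeterSystem



namespace GeomCoxeterSystem

set_option linter.unusedSectionVars false

variable {B : Type} [Fintype B] [DecidableEq B] {W : Type} [Group W] (g : GeomCoxeterSystem B W)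

/-- the angle `π / m(i,j)` -/
def thv (i j : B) : ℝ := Real.pi / (g.M i j : ℝ)

/-- `sin (k θ) / sin θ`, resp. `k` in the degenerate case -/
def Sc (i j : B) (k : ℕ) : ℝ :=
  if g.M i j = 0 then (k : ℝ) else Real.sin (k * g.thv i j) / Real.sin (g.thv i j)

lemma two_le_M {i j : B} (hij : i ≠ j) (hm : g.M i j ≠ 0) : 2 ≤ g.M i j := by
  have h1 := g.M.off_diagonal i j hij
  omega

lemma sin_thv_pos {i j : B} (hij : i ≠ j) (hm : g.M i j ≠ 0) : 0 < Real.sin (g.thv i j) := by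
  have h2 := g.two_le_M hij hm
  apply Real.sin_pos_of_pos_of_lt_pi
  · apply div_pos Real.pi_pos
    exact_mod_cast Nat.pos_of_ne_zero hm
  · apply div_lt_self Real.pi_pos
    have : (1:ℕ) < g.M i j := by omega
    exact_mod_cast this

lemma Sc_zero (i j : B) : g.Sc i j 0 = 0 := by simp [Sc]

lemma Sc_one {i j : B} (hij : i ≠ j) : g.Sc i j 1 = 1 := by
  unfold Sc
  split
  · norm_num
  · next hm => rw [Nat.cast_one, one_mul]; exact div_self (g.sin_thv_pos hij hm).ne'

lemma Sc_nonneg {i j : B} (hij : i ≠ j) (k : ℕ) (hk : g.M i j = 0 ∨ k ≤ g.M i j) :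
    0 ≤ g.Sc i j k := by
  unfold Sc
  by_cases hm : g.M i j = 0
  · rw [if_pos hm]; positivity
  · rw [if_neg hm]
    have hk' : k ≤ g.M i j := hk.resolve_left hm
    have hsp := g.sin_thv_pos hij hm
    apply div_nonneg _ hsp.le
    apply Real.sin_nonneg_of_nonneg_of_le_pi
    · have : 0 < g.thv i j := div_pos Real.pi_pos (by exact_mod_cast Nat.pos_of_ne_zero hm)
      positivity
    · have hmr : (0:ℝ) < (g.M i j : ℝ) := by exact_mod_cast Nat.pos_of_ne_zero hm
      have h1 : (k:ℝ) ≤ (g.M i j : ℝ) := by exact_mod_cast hk'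
      have h2 : (k:ℝ) * g.thv i j ≤ (g.M i j : ℝ) * g.thv i j := by
        apply mul_le_mul_of_nonneg_right h1
        exact (div_pos Real.pi_pos hmr).le
      have h3 : (g.M i j : ℝ) * g.thv i j = Real.pi := by
        unfold thv; field_simp
      linarith

lemma Sc_rec (i j : B) (k : ℕ) :
    g.Sc i j (k + 2) = 2 * Real.cos (g.thv i j) * g.Sc i j (k + 1) - g.Sc i j k := by
  by_cases hm : g.M i j = 0
  · simp only [Sc, if_pos hm]
    have : g.thv i j = 0 := by unfold thv; rw [hm]; norm_num
    rw [this, Real.cos_zero]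
    push_cast
    ring
  · simp only [Sc, if_neg hm]
    set t := g.thv i j
    have key : Real.sin (((k:ℝ) + 2) * t)
        = 2 * Real.cos t * Real.sin (((k:ℝ) + 1) * t) - Real.sin ((k:ℝ) * t) := by
      have e1 : ((k:ℝ) + 2) * t = ((k:ℝ) + 1) * t + t := by ring
      have e2 : (k:ℝ) * t = ((k:ℝ) + 1) * t - t := by ring
      rw [e1, e2, Real.sin_add, Real.sin_sub]
      ring
    push_cast
    rw [key]
    ring

/-- the letters of the alternating descent walk -/
def cseq (i j : B) (k : ℕ) : B := if Even k then j else i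

/-- the alternating words of the walk -/
def Lw (i j : B) (k : ℕ) : List B :=
  if Even k then CoxeterSystem.alternatingWord j i k else CoxeterSystem.alternatingWord i j k

lemma Lw_zero (i j : B) : Lw i j 0 = [] := by
  simp [Lw, CoxeterSystem.alternatingWord]

lemma Lw_succ (i j : B) (k : ℕ) : Lw i j (k + 1) = (Lw i j k).concat (cseq i j k) := by
  rcases Nat.even_or_odd k with h | h
  · have h1 : ¬ Even (k + 1) := by simpa [Nat.even_add_one] using h
    simp only [Lw, cseq, if_pos h, if_neg h1]
    exact CoxeterSystem.alternatingWord_succ i j k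
  · have h0 : ¬ Even k := Nat.not_even_iff_odd.mpr h
    have h1 : Even (k + 1) := by simpa [Nat.even_add_one] using h0
    simp only [Lw, cseq, if_pos h1, if_neg h0]
    exact CoxeterSystem.alternatingWord_succ j i k

lemma Lw_length (i j : B) (k : ℕ) : (Lw i j k).length = k := by
  unfold Lw; split <;> apply CoxeterSystem.length_alternatingWord

/-- the root sequence of the alternating walk -/
def qv (i j : B) (k : ℕ) : B → ℝ := g.σ ((g.cs.wordProd (Lw i j k))⁻¹) (alr i)

lemma qv_zero (i j : B) : g.qv i j 0 = alr i := by
  rw [qv, Lw_zero, CoxeterSystem.wordProd_nil, inv_one, g.sigma_one_apply]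

lemma qv_succ (i j : B) (k : ℕ) :
    g.qv i j (k + 1) = g.σ (g.cs.simple (cseq i j k)) (g.qv i j k) := by
  rw [qv, Lw_succ, CoxeterSystem.wordProd_concat, mul_inv_rev, g.cs.inv_simple,
    g.sigma_mul_apply]
  rfl

/-- coefficient of `α_i` in `qv` -/
def Acoef (i j : B) (k : ℕ) : ℝ := if Even k then g.Sc i j (k + 1) else g.Sc i j k

/-- coefficient of `α_j` in `qv` -/
def Bcoef (i j : B) (k : ℕ) : ℝ :=
  (Real.sqrt (g.bil (alr i) (alr i)) / Real.sqrt (g.bil (alr j) (alr j))) *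
    (if Even k then g.Sc i j k else g.Sc i j (k + 1))

lemma qv_closed {i j : B} (hij : i ≠ j) (k : ℕ) :
    g.qv i j k = g.Acoef i j k • alr i + g.Bcoef i j k • alr j := by
  have hdi := g.bil_diag_pos i
  have hdj := g.bil_diag_pos j
  set di := g.bil (alr i) (alr i) with hdi_def
  set dj := g.bil (alr j) (alr j) with hdj_def
  have hsq1 : Real.sqrt (di * dj) = Real.sqrt di * Real.sqrt dj := Real.sqrt_mul hdi.le _
  have hsq2 : Real.sqrt dj * Real.sqrt dj = dj := Real.mul_self_sqrt hdj.le
  have hsq3 : Real.sqrt di * Real.sqrt di = di := Real.mul_self_sqrt hdi.le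
  have hsdj : (0:ℝ) < Real.sqrt dj := Real.sqrt_pos.mpr hdj
  have hsdi : (0:ℝ) < Real.sqrt di := Real.sqrt_pos.mpr hdi
  have hoff : g.bil (alr i) (alr j) = -Real.cos (g.thv i j) * Real.sqrt (di * dj) :=
    g.bil_offdiag i j hij
  induction k with
  | zero =>
      rw [g.qv_zero]
      simp [Acoef, Bcoef, g.Sc_zero, g.Sc_one hij]
  | succ k ih =>
      rw [g.qv_succ, ih, map_add, map_smul, map_smul]
      rcases Nat.even_or_odd k with hk | hk
      · have hk1 : ¬ Even (k + 1) := by simpa [Nat.even_add_one] using hk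
        rw [show cseq i j k = j from if_pos hk]
        rw [g.σ_simple j (alr i), g.sigma_simple_self j]
        have hji : g.bil (alr j) (alr i) = -Real.cos (g.thv i j) * Real.sqrt (di * dj) := by
          rw [g.bil_symm]; exact hoff
        rw [hji]
        have hA : g.Acoef i j (k + 1) = g.Acoef i j k := by
          simp [Acoef, hk, hk1]
        have hB : g.Bcoef i j (k + 1)
            = -(g.Acoef i j k * (2 * (-Real.cos (g.thv i j) * Real.sqrt (di * dj)) / dj))
              - g.Bcoef i j k := by
          simp only [Bcoef, Acoef, if_pos hk, if_neg hk1]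
          rw [g.Sc_rec, hsq1]
          set a := Real.sqrt di with ha_def
          set b := Real.sqrt dj with hb_def
          rw [← hsq2]
          field_simp
        rw [hA, hB]
        module
      · have hk0 : ¬ Even k := Nat.not_even_iff_odd.mpr hk
        have hk1 : Even (k + 1) := by simpa [Nat.even_add_one] using hk0
        rw [show cseq i j k = i from if_neg hk0]
        rw [g.σ_simple i (alr j), g.sigma_simple_self i]
        rw [hoff]
        have hB : g.Bcoef i j (k + 1) = g.Bcoef i j k := by
          simp [Bcoef, hk0, hk1]
        have hA : g.Acoef i j (k + 1)
            = -(g.Acoef i j k)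
              - g.Bcoef i j k * (2 * (-Real.cos (g.thv i j) * Real.sqrt (di * dj)) / di) := by
          simp only [Bcoef, Acoef, if_neg hk0, if_pos hk1]
          rw [g.Sc_rec, hsq1]
          set a := Real.sqrt di with ha_def
          set b := Real.sqrt dj with hb_def
          rw [← hsq3]
          field_simp
          ring
        rw [hA, hB]
        module

end GeomCoxeterSystem



namespace GeomCoxeterSystem

set_option linter.unusedSectionVars false
set_option maxHeartbeats 1000000

variable {B : Type} [Fintype B] [DecidableEq B] {W : Type} [Group W] (g : GeomCoxeterSystem B W)

lemma chain_main (w : W) (i j : B) (hij : i ≠ j)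
    (hi : ¬ g.cs.IsRightDescent w i) (hj : g.cs.IsRightDescent w j)
    (IH : ∀ u : W, g.cs.length u < g.cs.length w → ∀ x : B,
      ¬ g.cs.IsRightDescent u x → Posv (g.σ u (alr x))) :
    Posv (g.σ w (alr i)) := by
  set u : ℕ → W := fun k => w * g.cs.wordProd (Lw i j k) with hu_def
  have hu0 : u 0 = w := by simp [hu_def, Lw_zero]
  have husucc : ∀ k, u (k + 1) = u k * g.cs.simple (cseq i j k) := by
    intro k
    simp only [hu_def]
    rw [Lw_succ, CoxeterSystem.wordProd_concat, ← mul_assoc]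
  have hc0 : cseq i j 0 = j := if_pos Even.zero
  -- partial length additivity along descents
  have hlen : ∀ k, (∀ t, t < k → g.cs.IsRightDescent (u t) (cseq i j t)) →
      g.cs.length (u k) + k = g.cs.length w := by
    intro k
    induction k with
    | zero => intro _; rw [hu0]; omega
    | succ k ihk =>
        intro h
        have h1 := ihk (fun t ht => h t (by omega))
        have h2 := (g.cs.isRightDescent_iff).mp (h k (by omega))
        rw [← husucc] at h2
        omega
  -- termination of the walk
  have hex : ∃ k, ¬ g.cs.IsRightDescent (u k) (cseq i j k) := by
    by_contra hall
    push_neg at hall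
    have := hlen (g.cs.length w + 1) (fun t _ => hall t)
    omega
  set N := Nat.find hex with hN_def
  have hNspec : ¬ g.cs.IsRightDescent (u N) (cseq i j N) := Nat.find_spec hex
  have hNmin : ∀ t, t < N → g.cs.IsRightDescent (u t) (cseq i j t) := fun t ht =>
    not_not.mp (Nat.find_min hex ht)
  have hN0 : 0 < N := by
    rcases Nat.eq_zero_or_pos N with h | h
    · exfalso
      apply hNspec
      rw [h, hu0, hc0]
      exact hj
    · exact h
  have hlenN : g.cs.length (u N) + N = g.cs.length w := hlen N hNmin
  -- u N has no right descent at i nor j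
  have hnd_cN1 : ¬ g.cs.IsRightDescent (u N) (cseq i j (N - 1)) := by
    have hd := hNmin (N - 1) (by omega)
    intro hcon
    have huN : u N = u (N - 1) * g.cs.simple (cseq i j (N - 1)) := by
      conv_lhs => rw [show N = (N - 1) + 1 by omega]
      exact husucc (N - 1)
    rw [huN] at hcon
    exact (g.cs.isRightDescent_iff_not_isRightDescent_mul.mp hd) hcon
  have hcases : (cseq i j N = i ∧ cseq i j (N - 1) = j) ∨
      (cseq i j N = j ∧ cseq i j (N - 1) = i) := by
    rcases Nat.even_or_odd N with h | h
    · right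
      have h1 : ¬ Even (N - 1) := by
        rw [Nat.even_iff] at h ⊢
        omega
      exact ⟨if_pos h, if_neg h1⟩
    · left
      have h0 : ¬ Even N := Nat.not_even_iff_odd.mpr h
      have h1 : Even (N - 1) := by
        rw [Nat.even_iff]
        rw [Nat.even_iff] at h0
        omega
      exact ⟨if_neg h0, if_pos h1⟩
  have hndi : ¬ g.cs.IsRightDescent (u N) i := by
    rcases hcases with ⟨h1, _⟩ | ⟨_, h2⟩
    · rw [← h1]; exact hNspec
    · rw [← h2]; exact hnd_cN1
  have hndj : ¬ g.cs.IsRightDescent (u N) j := by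
    rcases hcases with ⟨_, h2⟩ | ⟨h1, _⟩
    · rw [← h2]; exact hnd_cN1
    · rw [← h1]; exact hNspec
  have hluN : g.cs.length (u N) < g.cs.length w := by omega
  have hPi : Posv (g.σ (u N) (alr i)) := IH _ hluN i hndi
  have hPj : Posv (g.σ (u N) (alr j)) := IH _ hluN j hndj
  -- the walk is shorter than m = M i j
  have hNm : g.M i j = 0 ∨ N + 1 ≤ g.M i j := by
    by_cases hm0 : g.M i j = 0
    · exact Or.inl hm0
    right
    by_contra hcon
    push_neg at hcon
    have hmN : g.M i j ≤ N := by omega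
    have hm2 : 2 ≤ g.M i j := g.two_le_M hij hm0
    have hlm : g.cs.length (u (g.M i j)) + g.M i j = g.cs.length w :=
      hlen _ (fun t ht => hNmin t (by omega))
    have hbraid : g.cs.wordProd (CoxeterSystem.alternatingWord j i (g.M i j))
        = g.cs.wordProd (CoxeterSystem.alternatingWord i j (g.M i j)) := by
      have h := g.cs.wordProd_braidWord_eq j i
      simp only [CoxeterSystem.braidWord] at h
      rw [g.M.symmetric j i] at h
      exact h
    obtain ⟨ω, hωlen, hπ⟩ : ∃ ω : List B, ω.length = g.M i j - 1 ∧
        g.cs.wordProd (Lw i j (g.M i j)) = g.cs.simple i * g.cs.wordProd ω := by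
      have hm1 : (g.M i j - 1) + 1 = g.M i j := by omega
      rcases Nat.even_or_odd (g.M i j) with hpar | hpar
      · refine ⟨CoxeterSystem.alternatingWord i j (g.M i j - 1),
          CoxeterSystem.length_alternatingWord _ _ _, ?_⟩
        have hodd : ¬ Even (g.M i j - 1) := by
          rw [Nat.even_iff] at hpar ⊢
          omega
        have hsplit : CoxeterSystem.alternatingWord i j (g.M i j)
            = i :: CoxeterSystem.alternatingWord i j (g.M i j - 1) := by
          conv_lhs => rw [← hm1]
          rw [CoxeterSystem.alternatingWord_succ', if_neg hodd]
        rw [show Lw i j (g.M i j) = CoxeterSystem.alternatingWord j i (g.M i j)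
          from if_pos hpar, hbraid, hsplit, CoxeterSystem.wordProd_cons]
      · refine ⟨CoxeterSystem.alternatingWord j i (g.M i j - 1),
          CoxeterSystem.length_alternatingWord _ _ _, ?_⟩
        have hpar0 : ¬ Even (g.M i j) := Nat.not_even_iff_odd.mpr hpar
        have heven : Even (g.M i j - 1) := by
          rw [Nat.even_iff]
          rw [Nat.even_iff] at hpar0
          omega
        have hsplit : CoxeterSystem.alternatingWord j i (g.M i j)
            = i :: CoxeterSystem.alternatingWord j i (g.M i j - 1) := by
          conv_lhs => rw [← hm1]
          rw [CoxeterSystem.alternatingWord_succ', if_pos heven]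
        rw [show Lw i j (g.M i j) = CoxeterSystem.alternatingWord i j (g.M i j)
          from if_neg hpar0, ← hbraid, hsplit, CoxeterSystem.wordProd_cons]
    have hws : w * g.cs.simple i = u (g.M i j) * (g.cs.wordProd ω)⁻¹ := by
      simp only [hu_def]
      rw [hπ]
      group
    have hlin : g.cs.length (w * g.cs.simple i)
        ≤ g.cs.length (u (g.M i j)) + (g.M i j - 1) := by
      rw [hws]
      have h1 := g.cs.length_mul_le (u (g.M i j)) (g.cs.wordProd ω)⁻¹
      have h2 : g.cs.length (g.cs.wordProd ω)⁻¹ = g.cs.length (g.cs.wordProd ω) :=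
        g.cs.length_inv _
      have h3 := g.cs.length_wordProd_le ω
      omega
    have : g.cs.IsRightDescent w i := by
      have : g.cs.length (w * g.cs.simple i) < g.cs.length w := by omega
      exact this
    exact hi this
  -- conclude
  have hq : g.σ w (alr i) = g.σ (u N) (g.qv i j N) := by
    have hw : w = u N * (g.cs.wordProd (Lw i j N))⁻¹ := by
      simp [hu_def]
    conv_lhs => rw [hw]
    rw [g.sigma_mul_apply]
    rfl
  rw [hq, g.qv_closed hij N, map_add, map_smul, map_smul]
  have hAcond : g.M i j = 0 ∨ N + 1 ≤ g.M i j := hNm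
  have hSA : 0 ≤ g.Acoef i j N := by
    unfold Acoef
    split
    · exact g.Sc_nonneg hij (N + 1) hAcond
    · exact g.Sc_nonneg hij N (hAcond.imp id (fun h => by omega))
  have hSB : 0 ≤ g.Bcoef i j N := by
    unfold Bcoef
    apply mul_nonneg (div_nonneg (Real.sqrt_nonneg _) (Real.sqrt_nonneg _))
    split
    · exact g.Sc_nonneg hij N (hAcond.imp id (fun h => by omega))
    · exact g.Sc_nonneg hij (N + 1) hAcond
  exact posv_add (posv_smul hSA hPi) (posv_smul hSB hPj)

theorem tits_pos (w : W) (i : B) (h : ¬ g.cs.IsRightDescent w i) : Posv (g.σ w (alr i)) := by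
  suffices H : ∀ n (w : W) (i : B), g.cs.length w = n → ¬ g.cs.IsRightDescent w i →
      Posv (g.σ w (alr i)) from H _ w i rfl h
  intro n
  induction n using Nat.strong_induction_on with
  | _ n IHn =>
    intro w i hlw hi
    by_cases hw1 : w = 1
    · subst hw1
      rw [g.sigma_one_apply]
      exact posv_alr i
    obtain ⟨j, hj⟩ := g.cs.exists_rightDescent_of_ne_one hw1
    have hij : i ≠ j := by rintro rfl; exact hi hj
    subst hlw
    exact g.chain_main w i j hij hi hj (fun u hu x hx => IHn _ hu u x rfl hx)

lemma root_posv_or_neg {γ : B → ℝ} (hγ : γ ∈ g.roots) : γ ∈ g.posRoots ∨ -γ ∈ g.posRoots := by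
  obtain ⟨⟨w, s⟩, rfl⟩ := hγ
  dsimp only
  by_cases h : g.cs.IsRightDescent w s
  · right
    have h2 : ¬ g.cs.IsRightDescent (w * g.cs.simple s) s :=
      g.cs.isRightDescent_iff_not_isRightDescent_mul.mp h
    have he : -(g.σ w (alr s)) = g.σ (w * g.cs.simple s) (alr s) := by
      rw [g.sigma_mul_apply, g.sigma_simple_self, map_neg]
    rw [he]
    exact ⟨g.mem_roots _ _, g.tits_pos _ _ h2⟩
  · exact Or.inl ⟨g.mem_roots _ _, g.tits_pos _ _ h⟩

end GeomCoxeterSystem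



namespace GeomCoxeterSystem

set_option linter.unusedSectionVars false
set_option maxHeartbeats 1000000

variable {B : Type} [Fintype B] [DecidableEq B] {W : Type} [Group W] (g : GeomCoxeterSystem B W)

lemma alr_mem_posRoots (j : B) : alr (B := B) j ∈ g.posRoots := by
  refine ⟨?_, fun s => posv_alr j s⟩
  have := g.mem_roots 1 j
  rwa [g.sigma_one_apply] at this

lemma length_le_card_inv (w : W) :
    g.cs.length w ≤ ((g.PRF).filter (fun β => ¬ Posv (g.σ w β))).card := by
  suffices H : ∀ n (w : W), g.cs.length w = n →
      g.cs.length w ≤ ((g.PRF).filter (fun β => ¬ Posv (g.σ w β))).card from H _ w rfl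
  intro n
  induction n using Nat.strong_induction_on with
  | _ n IHn =>
    intro w hlw
    by_cases hw1 : w = 1
    · subst hw1; simp
    obtain ⟨j, hj⟩ := g.cs.exists_rightDescent_of_ne_one hw1
    set w' := w * g.cs.simple j with hw'_def
    have hlw' : g.cs.length w' + 1 = g.cs.length w := (g.cs.isRightDescent_iff).mp hj
    have hnd : ¬ g.cs.IsRightDescent w' j := g.cs.isRightDescent_iff_not_isRightDescent_mul.mp hj
    have hPosj : Posv (g.σ w' (alr j)) := g.tits_pos _ _ hnd
    have hww' : w = w' * g.cs.simple j := by
      rw [hw'_def, mul_assoc, g.cs.simple_mul_simple_self, mul_one]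
    have hne : g.σ w' (alr j) ≠ 0 := g.sigma_ne_zero _ (alr_ne_zero j)
    set I := (g.PRF).filter (fun β => ¬ Posv (g.σ w β)) with hI
    set I' := (g.PRF).filter (fun β => ¬ Posv (g.σ w' β)) with hI'
    set R := (g.PRF).filter (fun β => ∃ a : ℝ, β = a • alr j) with hR
    have hsw : ∀ β : B → ℝ, g.σ w β = g.σ w' (g.σ (g.cs.simple j) β) := by
      intro β
      rw [hww', g.sigma_mul_apply]
    -- positive multiples of α_j are inversions of w
    have hRI : R ⊆ I := by
      intro β hβ
      rw [hR, Finset.mem_filter] at hβ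
      obtain ⟨hβP, a, ha⟩ := hβ
      rw [hI, Finset.mem_filter]
      refine ⟨hβP, ?_⟩
      have hβpos := g.mem_PRF.mp hβP
      have ha0 : 0 < a := by
        have h1 : 0 ≤ a := by
          have := hβpos.2 j
          rw [ha] at this
          simpa [alr] using this
        rcases h1.lt_or_eq with h | h
        · exact h
        · exfalso
          apply g.root_ne_zero hβpos.1
          rw [ha, ← h, zero_smul]
      have hfor : g.σ w β = (-a) • g.σ w' (alr j) := by
        calc g.σ w β = g.σ w' (g.σ (g.cs.simple j) (a • alr j)) := by rw [hsw, ha]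
        _ = g.σ w' (a • -(alr j)) := by rw [map_smul, g.sigma_simple_self]
        _ = (-a) • g.σ w' (alr j) := by
            rw [smul_neg, ← neg_smul, map_smul]
      intro hcon
      apply hne
      funext s
      have h1 := hPosj s
      have h2 := hcon s
      rw [hfor] at h2
      simp only [Pi.smul_apply, smul_eq_mul] at h2
      have : g.σ w' (alr j) s = 0 := by nlinarith
      simpa using this
    -- inversions of w' are never multiples of α_j
    have hI'R : ∀ β ∈ I', β ∉ R := by
      intro β hβ hβR
      rw [hI', Finset.mem_filter] at hβ
      rw [hR, Finset.mem_filter] at hβR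
      obtain ⟨hβP, a, ha⟩ := hβR
      apply hβ.2
      have h1 : 0 ≤ a := by
        have := (g.mem_PRF.mp hβP).2 j
        rw [ha] at this
        simpa [alr] using this
      rw [ha, map_smul]
      exact posv_smul h1 hPosj
    -- σ_j maps inversions of w' into inversions of w, avoiding multiples of α_j
    have himg : ∀ β ∈ I', g.σ (g.cs.simple j) β ∈ I ∧ g.σ (g.cs.simple j) β ∉ R := by
      intro β hβ
      have hβR := hI'R β hβ
      rw [hI', Finset.mem_filter] at hβ
      obtain ⟨hβP, hβneg⟩ := hβ
      have hβpos := g.mem_PRF.mp hβP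
      have hk : ∃ k, k ≠ j ∧ 0 < β k := by
        by_contra hcon
        push_neg at hcon
        apply hβR
        rw [hR, Finset.mem_filter]
        refine ⟨hβP, β j, ?_⟩
        funext s
        by_cases hs : s = j
        · subst hs; simp [alr]
        · have h1 := hcon s hs
          have h2 := hβpos.2 s
          have h3 : β s = 0 := le_antisymm h1 h2
          simp [alr, Pi.single_apply, hs, h3]
      obtain ⟨k, hkj, hk⟩ := hk
      have hcoord : (g.σ (g.cs.simple j) β) k = β k := by
        rw [g.σ_simple]
        simp [alr, Pi.single_apply, hkj]
      have hroot : g.σ (g.cs.simple j) β ∈ g.roots := g.roots_sigma _ hβpos.1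
      have hposv : g.σ (g.cs.simple j) β ∈ g.posRoots := by
        rcases g.root_posv_or_neg hroot with h | h
        · exact h
        · exfalso
          have := h.2 k
          rw [Pi.neg_apply, hcoord] at this
          linarith
      constructor
      · rw [hI, Finset.mem_filter]
        refine ⟨g.mem_PRF.mpr hposv, ?_⟩
        have heq : g.σ w (g.σ (g.cs.simple j) β) = g.σ w' β := by
          rw [← g.sigma_mul_apply, ← hw'_def]
        rw [heq]
        exact hβneg
      · intro hcon
        rw [hR, Finset.mem_filter] at hcon
        obtain ⟨_, a, ha⟩ := hcon
        have := congrFun ha k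
        rw [hcoord] at this
        rw [Pi.smul_apply] at this
        simp only [alr, Pi.single_apply, if_neg hkj, smul_eq_mul, mul_zero] at this
        linarith
    have hinj : Set.InjOn (fun β => g.σ (g.cs.simple j) β) ↑I' := by
      intro x _ y _ h
      exact (g.σ (g.cs.simple j)).injective h
    have hsub : I'.image (fun β => g.σ (g.cs.simple j) β) ∪ R ⊆ I := by
      intro β hβ
      rcases Finset.mem_union.mp hβ with h | h
      · obtain ⟨β', hβ', rfl⟩ := Finset.mem_image.mp h
        exact (himg β' hβ').1
      · exact hRI h
    have hdisj : Disjoint (I'.image (fun β => g.σ (g.cs.simple j) β)) R := by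
      rw [Finset.disjoint_left]
      intro β hβ
      obtain ⟨β', hβ', rfl⟩ := Finset.mem_image.mp hβ
      exact (himg β' hβ').2
    have hαj : alr j ∈ R := by
      rw [hR, Finset.mem_filter]
      exact ⟨g.mem_PRF.mpr (g.alr_mem_posRoots j), 1, (one_smul _ _).symm⟩
    have hcard := Finset.card_le_card hsub
    rw [Finset.card_union_of_disjoint hdisj, Finset.card_image_of_injOn hinj] at hcard
    have hRpos : 1 ≤ R.card := Finset.card_pos.mpr ⟨alr j, hαj⟩
    have hIH : g.cs.length w' ≤ I'.card := IHn (g.cs.length w') (by omega) w' rfl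
    omega

end GeomCoxeterSystem

set_option maxHeartbeats 1000000 in
/-- For a finite crystallographic Coxeter system and every positive
root `γ`, one has `2(ρ, γ∨) - 1 ≥ l(s_γ)`. -/
theorem length_of_reflection_le (g : GeomCoxeterSystem B W)
    (hcr : g.IsCrystallographic) (γ : B → ℝ) (hγ : γ ∈ g.posRoots) :
    (g.cs.length (g.refl γ) : ℝ) ≤ 2 * g.pairRho γ - 1 := by
  have hγr : γ ∈ g.roots := hγ.1
  have hγpos : Posv γ := hγ.2
  have hbγ : (0:ℝ) < g.bil γ γ := g.bil_root_pos hγr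
  set t := g.refl γ with ht_def
  set n : (B → ℝ) → ℝ := fun β => 2 * g.bil γ β / g.bil γ γ with hn_def
  have hst : ∀ β : B → ℝ, g.σ t β = β - n β • γ := fun β => g.sigma_refl_apply hγr β
  have hstγ : g.σ t γ = -γ := g.sigma_refl_self hγr
  have htt : ∀ β : B → ℝ, g.σ t (g.σ t β) = β := by
    intro β
    rw [← g.sigma_mul_apply, g.refl_mul_self hγr, g.sigma_one_apply]
  have hbilt : ∀ β, g.bil γ (g.σ t β) = - g.bil γ β := by
    intro β
    have h := g.bil_sigma t γ (g.σ t β)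
    rw [htt] at h
    rw [← h, hstγ, map_neg, LinearMap.neg_apply]
  have hnt : ∀ β, n (g.σ t β) = - n β := by
    intro β
    rw [hn_def]
    dsimp only
    rw [hbilt]
    ring
  have hγP : γ ∈ g.PRF := g.mem_PRF.mpr hγ
  have hγI : ¬ Posv (g.σ t γ) := by
    rw [hstγ]
    intro hcon
    apply g.root_ne_zero hγr
    funext s
    have h1 := hγpos s
    have h2 := hcon s
    rw [Pi.neg_apply] at h2
    have h3 : γ s = 0 := le_antisymm (by linarith) h1
    simpa using h3
  -- the sum identity
  have hsum : 2 * g.pairRho γ = ∑ β ∈ g.PRF, n β := by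
    have hfs : ∑ᶠ β ∈ g.posRoots, (β : B → ℝ) = ∑ β ∈ g.PRF, β := by
      rw [← Set.Finite.coe_toFinset g.posRoots_finite, finsum_mem_coe_finset]
      rfl
    have hrho : g.bil g.rho γ = 2⁻¹ * ∑ β ∈ g.PRF, g.bil β γ := by
      unfold rho
      rw [hfs, map_smul, LinearMap.smul_apply, smul_eq_mul]
      congr 1
      rw [map_sum]
      exact LinearMap.sum_apply _ _ _
    have hre : ∑ β ∈ g.PRF, n β = (∑ β ∈ g.PRF, g.bil β γ) * (2 / g.bil γ γ) := by
      rw [Finset.sum_mul]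
      apply Finset.sum_congr rfl
      intro β _
      rw [hn_def]
      dsimp only
      rw [g.bil_symm γ β]
      ring
    unfold pairRho
    rw [hrho, hre]
    field_simp
  set P := (g.PRF.erase γ).filter (fun β => Posv (g.σ t β)) with hP
  set Q := (g.PRF.erase γ).filter (fun β => ¬ Posv (g.σ t β)) with hQ
  have hsplit : ∑ β ∈ g.PRF, n β = n γ + (∑ β ∈ P, n β + ∑ β ∈ Q, n β) := by
    rw [hP, hQ, Finset.sum_filter_add_sum_filter_not (g.PRF.erase γ) (fun β => Posv (g.σ t β)) n,
      Finset.add_sum_erase _ n hγP]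
  have hnγ : n γ = 2 := by
    rw [hn_def]
    dsimp only
    field_simp
  have hPsum : ∑ β ∈ P, n β = 0 := by
    apply Finset.sum_involution (fun β _ => g.σ t β)
    · intro β hβ
      rw [hnt]
      ring
    · intro β hβ hnβ hfix
      apply hnβ
      have h := hnt β
      rw [hfix] at h
      linarith
    · intro β hβ
      rw [hP, Finset.mem_filter, Finset.mem_erase] at hβ
      obtain ⟨⟨hβγ, hβP⟩, hβpos⟩ := hβ
      have hβr := g.mem_PRF.mp hβP
      have hroot : g.σ t β ∈ g.roots := g.roots_sigma _ hβr.1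
      rw [hP, Finset.mem_filter, Finset.mem_erase]
      refine ⟨⟨?_, g.mem_PRF.mpr ⟨hroot, hβpos⟩⟩, ?_⟩
      · intro hcon
        have h2 : β = -γ := by
          have h3 := congrArg (g.σ t) hcon
          rwa [htt, hstγ] at h3
        apply g.root_ne_zero hγr
        funext s
        have h1 := hβr.2 s
        rw [h2, Pi.neg_apply] at h1
        have h4 := hγpos s
        have h5 : γ s = 0 := le_antisymm (by linarith) h4
        simpa using h5
      · rw [htt]
        exact hβr.2
    · intro β hβ
      exact htt β
  have hQsum : (Q.card : ℝ) ≤ ∑ β ∈ Q, n β := by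
    have h1 : ∀ β ∈ Q, (1:ℝ) ≤ n β := by
      intro β hβ
      rw [hQ, Finset.mem_filter, Finset.mem_erase] at hβ
      obtain ⟨⟨hβγ, hβP⟩, hβneg⟩ := hβ
      have hβr := g.mem_PRF.mp hβP
      obtain ⟨k, hk⟩ := hcr γ hγr β hβr.1
      have hnk : n β = (k:ℝ) := hk
      rw [hnk]
      by_contra hcon
      push_neg at hcon
      have hk0 : (k:ℝ) ≤ 0 := by
        have h2 : k < 1 := by exact_mod_cast hcon
        have h3 : k ≤ 0 := by omega
        exact_mod_cast h3
      apply hβneg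
      rw [hst, hnk]
      intro s
      rw [Pi.sub_apply, Pi.smul_apply, smul_eq_mul]
      have h2 := hβr.2 s
      have h3 := hγpos s
      nlinarith
    calc (Q.card : ℝ) = ∑ _β ∈ Q, (1:ℝ) := by simp
    _ ≤ ∑ β ∈ Q, n β := Finset.sum_le_sum h1
  set I := (g.PRF).filter (fun β => ¬ Posv (g.σ t β)) with hI
  have hγI' : γ ∈ I := by
    rw [hI, Finset.mem_filter]
    exact ⟨hγP, hγI⟩
  have hQI : Q = I.erase γ := by
    rw [hQ, hI]
    ext β
    simp only [Finset.mem_filter, Finset.mem_erase]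
    tauto
  have hlen := g.length_le_card_inv t
  rw [← hI] at hlen
  have hIcard : 1 ≤ I.card := Finset.card_pos.mpr ⟨γ, hγI'⟩
  have hQcard : Q.card = I.card - 1 := by rw [hQI, Finset.card_erase_of_mem hγI']
  have hlenR : (g.cs.length t : ℝ) ≤ (I.card : ℝ) := by exact_mod_cast hlen
  have hQR : (I.card : ℝ) - 1 = (Q.card : ℝ) := by
    rw [hQcard, Nat.cast_sub hIcard]
    norm_num
  have hfinal : 2 * g.pairRho γ = 2 + (∑ β ∈ P, n β + ∑ β ∈ Q, n β) := by
    rw [hsum, hsplit, hnγ]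
  rw [hfinal, hPsum]
  linarith
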